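/- Let P ∈ P_m(ℂ^{n×n}) be a regular matrix polynomial of degree m ≥ 1, and let L(z) = zX + Y with X, Y ∈ ℂ^{mn×mn} be a pencil in 𝕃₁(P) with right ansatz vector v ∈ ℂ^m of norm ‖v‖₂ = 1, i.e. L(λ)·(Λ_{m−1} ⊗ I_n) = v ⊗ P(λ) for every λ ∈ ℂ. Then for every λ ∈ ℂ and x ∈ ℂⁿ with x^H x = 1, sqrt((m+1)/(2m)) · η(λ, x, P) ≤ η(λ, Λ_{m−1} ⊗ x, L) ≤ η(λ, x, P), where Λ_{m−1} := (λ^{m−1}, …, λ, 1)ᵀ. -/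

import Mathlib

open scoped ComplexConjugate
open Matrix

noncomputable section

variable {ι : Type*} [Fintype ι] [DecidableEq ι]

/-- Evaluation of the matrix polynomial with coefficient list `A` at the point `z`. -/
def polyEval {m : ℕ} (A : Fin (m+1) → Matrix ι ι ℂ) (z : ℂ) : Matrix ι ι ℂ :=
  ∑ j : Fin (m+1), z ^ (j : ℕ) • A j

/-- Squared Euclidean norm of a complex vector. -/
def vecNormSq (x : ι → ℂ) : ℝ := ∑ i, ‖x i‖ ^ 2

/-- Euclidean norm of a complex vector. -/
def vecNorm (x : ι → ℂ) : ℝ := Real.sqrt (vecNormSq x)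

/-- `‖(1, z, …, z^m)‖₂²`. -/
def lamNormSq (m : ℕ) (z : ℂ) : ℝ := ∑ j : Fin (m+1), ‖z ^ (j : ℕ)‖ ^ 2

/-- Squared Frobenius norm of a matrix. -/
def frobNormSq (M : Matrix ι ι ℂ) : ℝ := ∑ i, ∑ k, ‖M i k‖ ^ 2

/-- Spectral (operator 2-) norm of a matrix. -/
def specNorm (M : Matrix ι ι ℂ) : ℝ := ‖Matrix.toEuclideanCLM (𝕜 := ℂ) M‖

/-- Frobenius norm of a matrix polynomial: `(Σ_j ‖A_j‖_F²)^{1/2}`. -/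
def polyNormF {m : ℕ} (A : Fin (m+1) → Matrix ι ι ℂ) : ℝ :=
  Real.sqrt (∑ j, frobNormSq (A j))

/-- Spectral norm of a matrix polynomial: `(Σ_j ‖A_j‖₂²)^{1/2}`. -/
def polyNorm2 {m : ℕ} (A : Fin (m+1) → Matrix ι ι ℂ) : ℝ :=
  Real.sqrt (∑ j, specNorm (A j) ^ 2)

/-- Structured backward error of `(lam, x)` as an approximate eigenpair of the matrix
polynomial `A`, with respect to the polynomial norm `N` and the structure class `S`. -/
def eta {m : ℕ} (N : (Fin (m+1) → Matrix ι ι ℂ) → ℝ)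
    (S : Set (Fin (m+1) → Matrix ι ι ℂ)) (lam : ℂ) (x : ι → ℂ)
    (A : Fin (m+1) → Matrix ι ι ℂ) : ℝ :=
  sInf {t | ∃ ΔA ∈ S, (polyEval A lam + polyEval ΔA lam) *ᵥ x = 0 ∧ t = N ΔA}

/-- A matrix polynomial is regular if `det P(z) ≠ 0` for some `z`. -/
def Regular {m : ℕ} (A : Fin (m+1) → Matrix ι ι ℂ) : Prop :=
  ∃ z : ℂ, (polyEval A z).det ≠ 0


/-- The Kronecker product of two vectors. -/
def kronVec {m' n : ℕ} (v : Fin m' → ℂ) (x : Fin n → ℂ) : Fin m' × Fin n → ℂ :=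
  fun p => v p.1 * x p.2

/-- `Λ_{m−1}(z) = (z^{m−1}, …, z, 1)ᵀ`. -/
def lamVec (m : ℕ) (z : ℂ) : Fin m → ℂ := fun i => z ^ (m - 1 - (i : ℕ))

/-- The pencil `L(z) = zX + Y`, encoded by its coefficient list `B` with `B 0 = Y`,
`B 1 = X`, lies in `𝕃₁(P)` with right ansatz vector `v`:
`L(z)·(Λ_{m−1} ⊗ I_n) = v ⊗ P(z)` for all `z` (stated via the action on vectors). -/
def InL1 {n m : ℕ} (A : Fin (m+1) → Matrix (Fin n) (Fin n) ℂ)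
    (B : Fin (1+1) → Matrix (Fin m × Fin n) (Fin m × Fin n) ℂ) (v : Fin m → ℂ) : Prop :=
  ∀ (z : ℂ) (u : Fin n → ℂ),
    polyEval B z *ᵥ kronVec (lamVec m z) u = kronVec v (polyEval A z *ᵥ u)

set_option linter.unusedSectionVars false

def toE (x : ι → ℂ) : EuclideanSpace ℂ ι := (WithLp.equiv 2 (ι → ℂ)).symm x

lemma vecNorm_toE (x : ι → ℂ) : vecNorm x = ‖toE x‖ := by
  rw [EuclideanSpace.norm_eq]; rfl

lemma toE_add (x y : ι → ℂ) : toE (x + y) = toE x + toE y := rfl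

lemma toE_smul (c : ℂ) (x : ι → ℂ) : toE (c • x) = c • toE x := rfl

lemma toE_neg (x : ι → ℂ) : toE (-x) = -toE x := rfl

lemma toE_sum {κ : Type*} (s : Finset κ) (f : κ → ι → ℂ) :
    toE (∑ j ∈ s, f j) = ∑ j ∈ s, toE (f j) := by
  classical
  induction s using Finset.induction with
  | empty => rfl
  | insert _ _ h ih => rw [Finset.sum_insert h, Finset.sum_insert h, toE_add, ih]

lemma vecNormSq_nonneg (x : ι → ℂ) : 0 ≤ vecNormSq x :=
  Finset.sum_nonneg fun _ _ => sq_nonneg _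

lemma vecNorm_nonneg (x : ι → ℂ) : 0 ≤ vecNorm x := Real.sqrt_nonneg _

lemma vecNorm_sq (x : ι → ℂ) : vecNorm x ^ 2 = vecNormSq x :=
  Real.sq_sqrt (vecNormSq_nonneg x)

lemma vecNorm_smul (c : ℂ) (x : ι → ℂ) : vecNorm (c • x) = ‖c‖ * vecNorm x := by
  rw [vecNorm_toE, vecNorm_toE, toE_smul, norm_smul]

lemma vecNorm_neg (x : ι → ℂ) : vecNorm (-x) = vecNorm x := by
  rw [vecNorm_toE, vecNorm_toE, toE_neg, norm_neg]

lemma vecNorm_sum_le {κ : Type*} (s : Finset κ) (f : κ → ι → ℂ) :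
    vecNorm (∑ j ∈ s, f j) ≤ ∑ j ∈ s, vecNorm (f j) := by
  rw [vecNorm_toE, toE_sum]
  exact (norm_sum_le s fun j => toE (f j)).trans (le_of_eq (by simp [vecNorm_toE]))

lemma mulVec_le_spec (M : Matrix ι ι ℂ) (z : ι → ℂ) :
    vecNorm (M *ᵥ z) ≤ specNorm M * vecNorm z := by
  have h : Matrix.toEuclideanCLM (𝕜 := ℂ) M (toE z) = toE (M *ᵥ z) := by
    rw [toE]; rfl
  rw [vecNorm_toE, vecNorm_toE, ← h]
  exact (Matrix.toEuclideanCLM (𝕜 := ℂ) M).le_opNorm _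

lemma mulVec_le_frob (M : Matrix ι ι ℂ) (z : ι → ℂ) :
    vecNorm (M *ᵥ z) ≤ Real.sqrt (frobNormSq M) * vecNorm z := by
  have hrow : ∀ i, ‖(M *ᵥ z) i‖ ≤ Real.sqrt (∑ k, ‖M i k‖ ^ 2) * Real.sqrt (vecNormSq z) := by
    intro i
    calc ‖(M *ᵥ z) i‖ ≤ ∑ k, ‖M i k * z k‖ := norm_sum_le _ _
    _ = ∑ k, ‖M i k‖ * ‖z k‖ := by simp [norm_mul]
    _ ≤ _ := Real.sum_mul_le_sqrt_mul_sqrt _ _ _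
  have h2 : vecNormSq (M *ᵥ z) ≤ frobNormSq M * vecNormSq z := by
    rw [vecNormSq, frobNormSq, Finset.sum_mul]
    refine Finset.sum_le_sum fun i _ => ?_
    calc ‖(M *ᵥ z) i‖ ^ 2 ≤ (Real.sqrt (∑ k, ‖M i k‖ ^ 2) * Real.sqrt (vecNormSq z)) ^ 2 := by
          have := hrow i; nlinarith [norm_nonneg ((M *ᵥ z) i)]
    _ = (∑ k, ‖M i k‖ ^ 2) * vecNormSq z := by
          rw [mul_pow, Real.sq_sqrt (Finset.sum_nonneg fun _ _ => sq_nonneg _), Real.sq_sqrt (vecNormSq_nonneg z)]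
  calc vecNorm (M *ᵥ z) ≤ Real.sqrt (frobNormSq M * vecNormSq z) := Real.sqrt_le_sqrt h2
  _ = _ := by
    have hf : (0:ℝ) ≤ frobNormSq M :=
      Finset.sum_nonneg fun _ _ => Finset.sum_nonneg fun _ _ => sq_nonneg _
    rw [Real.sqrt_mul hf]; rfl

lemma specNorm_le_frob (M : Matrix ι ι ℂ) : specNorm M ≤ Real.sqrt (frobNormSq M) := by
  apply ContinuousLinearMap.opNorm_le_bound _ (Real.sqrt_nonneg _)
  intro x
  have hx : x = toE (WithLp.equiv 2 (ι → ℂ) x) := rfl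
  rw [hx]
  have h : Matrix.toEuclideanCLM (𝕜 := ℂ) M (toE (WithLp.equiv 2 (ι → ℂ) x))
      = toE (M *ᵥ (WithLp.equiv 2 (ι → ℂ) x)) := by
    rw [toE]; rfl
  rw [h, ← vecNorm_toE, ← vecNorm_toE]
  exact mulVec_le_frob M _

lemma frobNormSq_smul (c : ℂ) (M : Matrix ι ι ℂ) :
    frobNormSq (c • M) = ‖c‖ ^ 2 * frobNormSq M := by
  simp [frobNormSq, Matrix.smul_apply, norm_smul, mul_pow, Finset.mul_sum]

lemma frobNormSq_vecMulVec (y u : ι → ℂ) :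
    frobNormSq (vecMulVec y u) = vecNormSq y * vecNormSq u := by
  simp only [frobNormSq, Matrix.vecMulVec_apply, norm_mul, mul_pow, vecNormSq,
    Finset.sum_mul, Finset.mul_sum]
  rw [Finset.sum_comm]

lemma vecMulVec_mulVec (y u w : ι → ℂ) :
    vecMulVec y u *ᵥ w = (u ⬝ᵥ w) • y := by
  funext i
  simp only [Matrix.mulVec, Matrix.vecMulVec_apply, dotProduct, Pi.smul_apply, smul_eq_mul,
    Finset.sum_mul]
  exact Finset.sum_congr rfl fun k _ => by ring

lemma star_dotProduct_self (w : ι → ℂ) : star w ⬝ᵥ w = (vecNormSq w : ℂ) := by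
  simp only [dotProduct, Pi.star_apply, vecNormSq]
  push_cast
  refine Finset.sum_congr rfl fun k _ => ?_
  rw [show ((‖w k‖:ℂ) ^ 2) = ((Complex.normSq (w k) : ℝ) : ℂ) by
    rw [Complex.normSq_eq_norm_sq]; norm_cast]
  rw [show star (w k) = (starRingEnd ℂ) (w k) from rfl, ← Complex.normSq_eq_conj_mul_self]

lemma lamNormSq_eq (m : ℕ) (z : ℂ) :
    lamNormSq m z = ∑ j : Fin (m+1), (‖z‖ ^ 2) ^ (j : ℕ) := by
  refine Finset.sum_congr rfl fun j _ => ?_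
  rw [norm_pow, ← pow_mul, ← pow_mul, Nat.mul_comm]

lemma one_le_lamNormSq (m : ℕ) (z : ℂ) : 1 ≤ lamNormSq m z := by
  rw [lamNormSq_eq]
  have := Finset.single_le_sum (f := fun j : Fin (m+1) => (‖z‖ ^ 2) ^ (j : ℕ))
    (fun j _ => by positivity) (Finset.mem_univ 0)
  simpa using this

lemma lamNormSq_cast (m : ℕ) (z : ℂ) :
    ∑ j : Fin (m+1), z ^ (j:ℕ) * (starRingEnd ℂ) z ^ (j:ℕ) = (lamNormSq m z : ℂ) := by
  rw [lamNormSq_eq]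
  push_cast
  refine Finset.sum_congr rfl fun j _ => ?_
  rw [← mul_pow, Complex.mul_conj]
  norm_cast
  rw [Complex.normSq_eq_norm_sq]

lemma lamNormSq_def (m : ℕ) (z : ℂ) :
    lamNormSq m z = ∑ j : Fin (m+1), ‖z ^ (j:ℕ)‖ ^ 2 := rfl

lemma sum_mulVec {κ : Type*} [Fintype κ] (M : κ → Matrix ι ι ℂ) (w : ι → ℂ) :
    (∑ j, M j) *ᵥ w = ∑ j, M j *ᵥ w := by
  funext i
  simp only [Matrix.mulVec, dotProduct, Matrix.sum_apply, Finset.sum_apply, Finset.sum_mul]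
  rw [Finset.sum_comm]

lemma eta_formula (nrm : Matrix ι ι ℂ → ℝ)
    (hnn : ∀ M, 0 ≤ nrm M)
    (hbd : ∀ M z, vecNorm (M *ᵥ z) ≤ nrm M * vecNorm z)
    (hfb : ∀ M, nrm M ≤ Real.sqrt (frobNormSq M))
    {m : ℕ} (A : Fin (m+1) → Matrix ι ι ℂ) (lam : ℂ) (w : ι → ℂ)
    (hw : 0 < vecNormSq w) :
    eta (fun ΔA => Real.sqrt (∑ j, nrm (ΔA j) ^ 2)) Set.univ lam w A
      = vecNorm (polyEval A lam *ᵥ w)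
        / (Real.sqrt (lamNormSq m lam) * vecNorm w) := by
  have hΛ2 : (0:ℝ) < lamNormSq m lam := lt_of_lt_of_le one_pos (one_le_lamNormSq m lam)
  set y := polyEval A lam *ᵥ w with hy
  set r := vecNorm y with hr
  set Λ := Real.sqrt (lamNormSq m lam) with hΛdef
  set W := vecNorm w with hW
  have hΛpos : 0 < Λ := Real.sqrt_pos.2 hΛ2
  have hWpos : 0 < W := Real.sqrt_pos.2 hw
  have hrnn : 0 ≤ r := Real.sqrt_nonneg _
  -- lower bound for all admissible perturbations
  have key : ∀ (ΔA : Fin (m+1) → Matrix ι ι ℂ),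
      (polyEval A lam + polyEval ΔA lam) *ᵥ w = 0 →
      r / (Λ * W) ≤ Real.sqrt (∑ j, nrm (ΔA j) ^ 2) := by
    intro ΔA h
    set N := Real.sqrt (∑ j, nrm (ΔA j) ^ 2) with hN
    have h1 : y = -(polyEval ΔA lam *ᵥ w) := by
      rw [Matrix.add_mulVec] at h
      exact eq_neg_of_add_eq_zero_left h
    have h2 : r = vecNorm (polyEval ΔA lam *ᵥ w) := by rw [hr, h1, vecNorm_neg]
    have h3 : polyEval ΔA lam *ᵥ w = ∑ j : Fin (m+1), (lam ^ (j:ℕ)) • (ΔA j *ᵥ w) := by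
      rw [polyEval, _root_.sum_mulVec]
      exact Finset.sum_congr rfl fun j _ => Matrix.smul_mulVec _ _ _
    have h4 : r ≤ ∑ j : Fin (m+1), ‖lam ^ (j:ℕ)‖ * (nrm (ΔA j) * W) := by
      rw [h2, h3]
      refine (vecNorm_sum_le _ _).trans (Finset.sum_le_sum fun j _ => ?_)
      rw [vecNorm_smul]
      exact mul_le_mul_of_nonneg_left (hbd _ _) (norm_nonneg _)
    have h6 : ∑ j : Fin (m+1), ‖lam ^ (j:ℕ)‖ * nrm (ΔA j) ≤ Λ * N := by
      have hcs := Real.sum_mul_le_sqrt_mul_sqrt Finset.univ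
        (fun j : Fin (m+1) => ‖lam ^ (j:ℕ)‖) (fun j => nrm (ΔA j))
      rw [← lamNormSq_def] at hcs
      exact hcs
    have h7 : r ≤ N * (Λ * W) := by
      calc r ≤ ∑ j : Fin (m+1), ‖lam ^ (j:ℕ)‖ * (nrm (ΔA j) * W) := h4
      _ = (∑ j : Fin (m+1), ‖lam ^ (j:ℕ)‖ * nrm (ΔA j)) * W := by
          rw [Finset.sum_mul]; exact Finset.sum_congr rfl fun j _ => by ring
      _ ≤ (Λ * N) * W := mul_le_mul_of_nonneg_right h6 hWpos.le
      _ = N * (Λ * W) := by ring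
    rw [div_le_iff₀ (mul_pos hΛpos hWpos)]
    exact h7
  -- the optimal perturbation
  have hΛne : ((lamNormSq m lam : ℝ) : ℂ) ≠ 0 := by
    exact_mod_cast ne_of_gt hΛ2
  have hWne : ((vecNormSq w : ℝ) : ℂ) ≠ 0 := by
    exact_mod_cast ne_of_gt hw
  set c : ℂ := ((lamNormSq m lam : ℝ) : ℂ) * ((vecNormSq w : ℝ) : ℂ) with hc
  have hcne : c ≠ 0 := mul_ne_zero hΛne hWne
  set ΔA₀ : Fin (m+1) → Matrix ι ι ℂ :=
    fun j => (-((starRingEnd ℂ) lam ^ (j:ℕ)) / c) • vecMulVec y (star w) with hΔA₀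
  have hpe : polyEval ΔA₀ lam
      = (-(((lamNormSq m lam : ℝ)):ℂ) / c) • vecMulVec y (star w) := by
    rw [polyEval]
    have hterm : ∀ j : Fin (m+1), lam ^ (j:ℕ) • ΔA₀ j
        = (lam ^ (j:ℕ) * (-((starRingEnd ℂ) lam ^ (j:ℕ)) / c)) • vecMulVec y (star w) := by
      intro j; rw [hΔA₀, smul_smul]
    rw [Finset.sum_congr rfl fun j _ => hterm j, ← Finset.sum_smul]
    congr 1
    calc ∑ j : Fin (m+1), lam ^ (j:ℕ) * (-((starRingEnd ℂ) lam ^ (j:ℕ)) / c)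
        = (∑ j : Fin (m+1), lam ^ (j:ℕ) * (starRingEnd ℂ) lam ^ (j:ℕ)) * (-1/c) := by
          rw [Finset.sum_mul]; exact Finset.sum_congr rfl fun j _ => by ring
    _ = -(((lamNormSq m lam : ℝ)):ℂ) / c := by rw [lamNormSq_cast]; ring
  have hcond : (polyEval A lam + polyEval ΔA₀ lam) *ᵥ w = 0 := by
    rw [Matrix.add_mulVec, hpe, Matrix.smul_mulVec, _root_.vecMulVec_mulVec,
      star_dotProduct_self, smul_smul]
    have hs : -(((lamNormSq m lam : ℝ)):ℂ) / c * ((vecNormSq w : ℝ):ℂ) = -1 := by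
      rw [hc]; field_simp
    rw [hs, ← hy]
    funext i; simp
  have hbound : Real.sqrt (∑ j, nrm (ΔA₀ j) ^ 2) ≤ r / (Λ * W) := by
    have hj : ∀ j : Fin (m+1), nrm (ΔA₀ j) ^ 2 ≤
        (‖lam‖^2)^(j:ℕ) / (lamNormSq m lam * vecNormSq w)^2
          * (vecNormSq y * vecNormSq w) := by
      intro j
      have h1 : nrm (ΔA₀ j) ^ 2 ≤ frobNormSq (ΔA₀ j) := by
        have hfrob_nn : (0:ℝ) ≤ frobNormSq (ΔA₀ j) :=
          Finset.sum_nonneg fun _ _ => Finset.sum_nonneg fun _ _ => sq_nonneg _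
        have := hfb (ΔA₀ j)
        nlinarith [hnn (ΔA₀ j), Real.sq_sqrt hfrob_nn, Real.sqrt_nonneg (frobNormSq (ΔA₀ j))]
      have h2 : frobNormSq (ΔA₀ j)
          = ‖-((starRingEnd ℂ) lam ^ (j:ℕ)) / c‖^2 * (vecNormSq y * vecNormSq (star w)) := by
        rw [hΔA₀, frobNormSq_smul, frobNormSq_vecMulVec]
      have h3 : vecNormSq (star w) = vecNormSq w := by
        simp [vecNormSq]
      have h4 : ‖-((starRingEnd ℂ) lam ^ (j:ℕ)) / c‖^2
          = (‖lam‖^2)^(j:ℕ) / (lamNormSq m lam * vecNormSq w)^2 := by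
        rw [norm_div, norm_neg, div_pow]
        congr 1
        · rw [norm_pow, RingHomIsometric.norm_map, ← pow_mul, ← pow_mul, Nat.mul_comm]
        · rw [hc, norm_mul, Complex.norm_real, Complex.norm_real]
          simp only [Real.norm_eq_abs]
          rw [abs_of_pos hΛ2, abs_of_pos hw]
      exact h1.trans (le_of_eq (by rw [h2, h3, h4]))
    have e1 : (r/(Λ*W))^2 = vecNormSq y/(lamNormSq m lam * vecNormSq w) := by
      rw [div_pow, mul_pow, hr, hΛdef, hW, Real.sq_sqrt hΛ2.le]
      simp only [vecNorm_sq]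
    have hsum : ∑ j, nrm (ΔA₀ j)^2 ≤ (r/(Λ*W))^2 := by
      calc ∑ j, nrm (ΔA₀ j)^2
          ≤ ∑ j : Fin (m+1), (‖lam‖^2)^(j:ℕ) / (lamNormSq m lam * vecNormSq w)^2
              * (vecNormSq y * vecNormSq w) := Finset.sum_le_sum fun j _ => hj j
      _ = (r/(Λ*W))^2 := by
          rw [e1, ← Finset.sum_mul, ← Finset.sum_div, ← lamNormSq_eq]
          field_simp
    calc Real.sqrt (∑ j, nrm (ΔA₀ j) ^ 2) ≤ Real.sqrt ((r/(Λ*W))^2) := Real.sqrt_le_sqrt hsum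
    _ = r/(Λ*W) := Real.sqrt_sq (by positivity)
  -- conclude
  have hmemL : (r/(Λ*W)) ∈ {t | ∃ ΔA ∈ (Set.univ : Set (Fin (m+1) → Matrix ι ι ℂ)),
      (polyEval A lam + polyEval ΔA lam) *ᵥ w = 0 ∧ t = Real.sqrt (∑ j, nrm (ΔA j) ^ 2)} :=
    ⟨ΔA₀, Set.mem_univ _, hcond, le_antisymm (key ΔA₀ hcond) hbound⟩
  rw [eta]
  refine le_antisymm (csInf_le ⟨r/(Λ*W), ?_⟩ hmemL) (le_csInf ⟨_, hmemL⟩ ?_)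
  · rintro t ⟨ΔA, -, hc', rfl⟩; exact key ΔA hc'
  · rintro t ⟨ΔA, -, hc', rfl⟩; exact key ΔA hc'

lemma eta_polyNormF {m : ℕ} (A : Fin (m+1) → Matrix ι ι ℂ) (lam : ℂ) (w : ι → ℂ)
    (hw : 0 < vecNormSq w) :
    eta polyNormF Set.univ lam w A
      = vecNorm (polyEval A lam *ᵥ w) / (Real.sqrt (lamNormSq m lam) * vecNorm w) := by
  have h : (polyNormF : (Fin (m+1) → Matrix ι ι ℂ) → ℝ)
      = fun ΔA => Real.sqrt (∑ j, (Real.sqrt (frobNormSq (ΔA j))) ^ 2) := by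
    funext ΔA
    rw [polyNormF]
    congr 1
    refine Finset.sum_congr rfl fun j _ => ?_
    exact (Real.sq_sqrt (Finset.sum_nonneg fun _ _ => Finset.sum_nonneg fun _ _ => sq_nonneg _)).symm
  rw [h]
  exact eta_formula _ (fun M => Real.sqrt_nonneg _) mulVec_le_frob (fun M => le_refl _) A lam w hw

lemma eta_polyNorm2 {m : ℕ} (A : Fin (m+1) → Matrix ι ι ℂ) (lam : ℂ) (w : ι → ℂ)
    (hw : 0 < vecNormSq w) :
    eta polyNorm2 Set.univ lam w A
      = vecNorm (polyEval A lam *ᵥ w) / (Real.sqrt (lamNormSq m lam) * vecNorm w) :=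
  eta_formula specNorm (fun M => norm_nonneg _) mulVec_le_spec specNorm_le_frob A lam w hw

lemma vecNormSq_kron {m' n : ℕ} (a : Fin m' → ℂ) (b : Fin n → ℂ) :
    vecNormSq (kronVec a b) = vecNormSq a * vecNormSq b := by
  simp only [vecNormSq, kronVec, Fintype.sum_prod_type, norm_mul, mul_pow,
    ← Finset.mul_sum, ← Finset.sum_mul]

lemma vecNormSq_lamVec (m : ℕ) (z : ℂ) :
    vecNormSq (lamVec m z) = ∑ k ∈ Finset.range m, (‖z‖^2)^k := by
  have h1 : ∀ i : Fin m, ‖lamVec m z i‖^2 = (‖z‖^2)^(m-1-(i:ℕ)) := by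
    intro i; rw [lamVec, norm_pow, ← pow_mul, ← pow_mul, Nat.mul_comm]
  rw [vecNormSq, Finset.sum_congr rfl fun i _ => h1 i,
    Fin.sum_univ_eq_sum_range (fun k => (‖z‖^2)^(m-1-k)) m]
  exact Finset.sum_range_reflect (fun k => (‖z‖^2)^k) m

lemma lamNormSq_range (m : ℕ) (z : ℂ) :
    lamNormSq m z = ∑ k ∈ Finset.range (m+1), (‖z‖^2)^k := by
  rw [lamNormSq_eq, Fin.sum_univ_eq_sum_range]

lemma lamNormSq_one (z : ℂ) : lamNormSq 1 z = 1 + ‖z‖^2 := by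
  rw [lamNormSq_eq, Fin.sum_univ_two]
  simp

lemma geom_ineqs (m : ℕ) (hm : 1 ≤ m) (t : ℝ) (ht : 0 ≤ t) :
    (∑ k ∈ Finset.range (m+1), t^k) ≤ (1+t) * (∑ k ∈ Finset.range m, t^k) ∧
    ((m:ℝ)+1)/(2*m) * ((1+t) * (∑ k ∈ Finset.range m, t^k))
      ≤ ∑ k ∈ Finset.range (m+1), t^k := by
  set S := ∑ k ∈ Finset.range m, t^k with hSdef
  set sM := ∑ k ∈ Finset.range (m+1), t^k with hsMdef
  have htS : t * S = sM - 1 := by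
    have h2 : ∑ k ∈ Finset.range m, t^(k+1) = t * S := by
      rw [hSdef, Finset.mul_sum]
      exact Finset.sum_congr rfl fun k _ => by ring
    rw [hsMdef, Finset.sum_range_succ' (fun k => t^k) m, h2]
    simp
  have hStm : S = sM - t^m := by
    rw [hsMdef, Finset.sum_range_succ]; ring
  have hid : (1+t) * S = 2*sM - 1 - t^m := by
    have : (1+t)*S = S + t*S := by ring
    rw [this, htS, hStm]; ring
  have hS1 : (1:ℝ) ≤ S := by
    have := Finset.single_le_sum (f := fun k => t^k)
      (fun k _ => pow_nonneg ht k) (Finset.mem_range.mpr (by omega : 0 < m))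
    simpa using this
  have hge : 1 + t^m ≤ sM := by
    have : S + t^m = sM := by rw [hStm]; ring
    nlinarith [pow_nonneg ht m]
  have hrefl : ∑ k ∈ Finset.range (m+1), t^(m-k) = sM := by
    have := Finset.sum_range_reflect (fun k => t^k) (m+1)
    simpa using this
  have hpt : ∀ k ∈ Finset.range (m+1), t^k + t^(m-k) ≤ 1 + t^m := by
    intro k hk
    have hk' : k ≤ m := Nat.lt_succ_iff.mp (Finset.mem_range.mp hk)
    have hmul : t^k * t^(m-k) = t^m := by rw [← pow_add, Nat.add_sub_cancel' hk']
    rcases le_total t 1 with h | h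
    · nlinarith [pow_le_one₀ ht h (n := k), pow_le_one₀ ht h (n := m - k),
        pow_nonneg ht k, pow_nonneg ht (m-k)]
    · nlinarith [one_le_pow₀ h (n := k), one_le_pow₀ h (n := m - k)]
  have hup : 2*sM ≤ ((m:ℝ)+1)*(1+t^m) := by
    have h2 : 2*sM = ∑ k ∈ Finset.range (m+1), (t^k + t^(m-k)) := by
      rw [Finset.sum_add_distrib, hrefl, ← hsMdef]; ring
    rw [h2]
    calc ∑ k ∈ Finset.range (m+1), (t^k + t^(m-k))
        ≤ ∑ _k ∈ Finset.range (m+1), (1+t^m) := Finset.sum_le_sum hpt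
    _ = ((m:ℝ)+1)*(1+t^m) := by
        rw [Finset.sum_const, Finset.card_range, nsmul_eq_mul]; push_cast; ring
  have hm' : (1:ℝ) ≤ (m:ℝ) := by exact_mod_cast hm
  constructor
  · nlinarith [pow_nonneg ht m]
  · rw [div_mul_eq_mul_div, div_le_iff₀ (by nlinarith : (0:ℝ) < 2*(m:ℝ))]
    nlinarith

lemma final_ineq (m : ℕ) (hm : 1 ≤ m) (t r : ℝ) (ht : 0 ≤ t) (hr : 0 ≤ r) :
    Real.sqrt (((m:ℝ)+1)/(2*m)) * (r / (Real.sqrt (∑ k ∈ Finset.range (m+1), t^k) * 1))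
      ≤ r / (Real.sqrt (1+t) * Real.sqrt (∑ k ∈ Finset.range m, t^k)) ∧
    r / (Real.sqrt (1+t) * Real.sqrt (∑ k ∈ Finset.range m, t^k))
      ≤ r / (Real.sqrt (∑ k ∈ Finset.range (m+1), t^k) * 1) := by
  obtain ⟨hA, hB⟩ := geom_ineqs m hm t ht
  set S := ∑ k ∈ Finset.range m, t^k with hSdef
  set sM := ∑ k ∈ Finset.range (m+1), t^k with hsMdef
  have hS1 : (1:ℝ) ≤ S := by
    have := Finset.single_le_sum (f := fun k => t^k)
      (fun k _ => pow_nonneg ht k) (Finset.mem_range.mpr (by omega : 0 < m))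
    simpa using this
  have hsM1 : (1:ℝ) ≤ sM := by
    have := Finset.single_le_sum (f := fun k => t^k)
      (fun k _ => pow_nonneg ht k) (Finset.mem_range.mpr (by omega : 0 < m+1))
    simpa using this
  have hSpos : (0:ℝ) < S := lt_of_lt_of_le one_pos hS1
  have hsMpos : (0:ℝ) < sM := lt_of_lt_of_le one_pos hsM1
  have h1t : (0:ℝ) < 1 + t := by linarith
  have hq : (0:ℝ) ≤ ((m:ℝ)+1)/(2*m) := by positivity
  have hDpos : 0 < Real.sqrt (1+t) * Real.sqrt S :=
    mul_pos (Real.sqrt_pos.2 h1t) (Real.sqrt_pos.2 hSpos)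
  have hsMspos : 0 < Real.sqrt sM := Real.sqrt_pos.2 hsMpos
  have hD : Real.sqrt (1+t) * Real.sqrt S = Real.sqrt ((1+t)*S) :=
    (Real.sqrt_mul h1t.le S).symm
  constructor
  · rw [mul_one, ← mul_div_assoc, div_le_div_iff₀ hsMspos hDpos]
    have key : Real.sqrt (((m:ℝ)+1)/(2*m)) * (Real.sqrt (1+t) * Real.sqrt S)
        ≤ Real.sqrt sM := by
      rw [hD, ← Real.sqrt_mul hq]
      exact Real.sqrt_le_sqrt hB
    calc Real.sqrt (((m:ℝ)+1)/(2*m)) * r * (Real.sqrt (1+t) * Real.sqrt S)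
        = r * (Real.sqrt (((m:ℝ)+1)/(2*m)) * (Real.sqrt (1+t) * Real.sqrt S)) := by ring
    _ ≤ r * Real.sqrt sM := mul_le_mul_of_nonneg_left key hr
  · rw [mul_one]
    have key : Real.sqrt sM ≤ Real.sqrt (1+t) * Real.sqrt S := by
      rw [hD]; exact Real.sqrt_le_sqrt hA
    exact div_le_div_of_nonneg_left hr hsMspos key

/-- Backward errors under linearization: for a linearization
`L ∈ 𝕃₁(P)` with normalized right ansatz vector `v`,
`sqrt((m+1)/(2m))·η(λ,x,P) ≤ η(λ, Λ_{m−1}⊗x, L) ≤ η(λ,x,P)`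
(for the Frobenius-based and the spectral-norm-based backward error alike). -/
theorem linearization_backward_error {n m : ℕ} (hm : 1 ≤ m)
    (A : Fin (m+1) → Matrix (Fin n) (Fin n) ℂ)
    (hreg : Regular A) (hlead : A (Fin.last m) ≠ 0)
    (B : Fin (1+1) → Matrix (Fin m × Fin n) (Fin m × Fin n) ℂ)
    (v : Fin m → ℂ) (hv : vecNormSq v = 1) (hL : InL1 A B v)
    (lam : ℂ) (x : Fin n → ℂ) (hx : star x ⬝ᵥ x = 1) :
    (Real.sqrt (((m : ℝ) + 1) / (2 * m)) * eta polyNormF Set.univ lam x A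
        ≤ eta polyNormF Set.univ lam (kronVec (lamVec m lam) x) B ∧
      eta polyNormF Set.univ lam (kronVec (lamVec m lam) x) B
        ≤ eta polyNormF Set.univ lam x A) ∧
    (Real.sqrt (((m : ℝ) + 1) / (2 * m)) * eta polyNorm2 Set.univ lam x A
        ≤ eta polyNorm2 Set.univ lam (kronVec (lamVec m lam) x) B ∧
      eta polyNorm2 Set.univ lam (kronVec (lamVec m lam) x) B
        ≤ eta polyNorm2 Set.univ lam x A) := by
  have hxsq : vecNormSq x = 1 := by
    have h := star_dotProduct_self x
    rw [hx] at h
    exact_mod_cast h.symm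
  have hxpos : 0 < vecNormSq x := by rw [hxsq]; exact one_pos
  have hVx : vecNorm x = 1 := by rw [vecNorm, hxsq, Real.sqrt_one]
  set t := ‖lam‖^2 with htdef
  have ht : (0:ℝ) ≤ t := by positivity
  set w := kronVec (lamVec m lam) x with hwdef
  have hwsq : vecNormSq w = ∑ k ∈ Finset.range m, t^k := by
    rw [hwdef, vecNormSq_kron, hxsq, mul_one, vecNormSq_lamVec]
  have hS1 : (1:ℝ) ≤ ∑ k ∈ Finset.range m, t^k := by
    have := Finset.single_le_sum (f := fun k => t^k) (fun k _ => pow_nonneg ht k)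
      (Finset.mem_range.mpr (by omega : 0 < m))
    simpa using this
  have hwpos : 0 < vecNormSq w := by rw [hwsq]; exact lt_of_lt_of_le one_pos hS1
  have hVw : vecNorm w = Real.sqrt (∑ k ∈ Finset.range m, t^k) := by rw [vecNorm, hwsq]
  set r := vecNorm (polyEval A lam *ᵥ x) with hrdef
  have hrnn : 0 ≤ r := Real.sqrt_nonneg _
  have hnum : vecNorm (polyEval B lam *ᵥ w) = r := by
    rw [hwdef, hL lam x, vecNorm, vecNormSq_kron, hv, one_mul, ← vecNorm, hrdef]
  have hPF := eta_polyNormF A lam x hxpos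
  have hP2 := eta_polyNorm2 A lam x hxpos
  have hLF := eta_polyNormF B lam w hwpos
  have hL2 := eta_polyNorm2 B lam w hwpos
  rw [← hrdef, hVx, lamNormSq_range, ← htdef] at hPF hP2
  rw [hnum, hVw, lamNormSq_one, ← htdef] at hLF hL2
  obtain ⟨h1, h2⟩ := final_ineq m hm t r ht hrnn
  rw [hPF, hP2, hLF, hL2]
  exact ⟨⟨h1, h2⟩, ⟨h1, h2⟩⟩
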